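/- Bounded Convergence Theorem for the RDS integral: let α ∈ BV[a,b] and let {f_n} be a uniformly bounded sequence of functions on [a,b] with each f_n RDS integrable with respect to α, f_n → f pointwise, and f RDS integrable with respect to α. Then lim_{n→∞} ∫_a^b f_n dα = ∫_a^b f dα. -/

import Mathlib

open Set Filter Topology
open scoped Classical

noncomputable section

/-- A partition `a = x 0 < x 1 < ... < x n = b` of `[a,b]`. -/
structure RDSPartition (a b : ℝ) where
  n : ℕ
  x : ℕ → ℝ
  mono : ∀ i, i < n → x i < x (i + 1)
  first : x 0 = a
  last : x n = b

/-- Right limit `α(t+)`, with the convention `α(b+) = α(b)` at the right endpoint. -/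
def rLim (b : ℝ) (α : ℝ → ℝ) (t : ℝ) : ℝ :=
  if t < b then Function.rightLim α t else α t

/-- Left limit `α(t-)`, with the convention `α(a-) = α(a)` at the left endpoint. -/
def lLim (a : ℝ) (α : ℝ → ℝ) (t : ℝ) : ℝ :=
  if a < t then Function.leftLim α t else α t

/-- `α`-length of the singleton `{t}` inside `[a,b]`: `α(t+) - α(t-)`. -/
def muPt (a b : ℝ) (α : ℝ → ℝ) (t : ℝ) : ℝ :=
  rLim b α t - lLim a α t

/-- `α`-length of the open interval `(c,d)` inside `[a,b]`: `α(d-) - α(c+)`. -/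
def muIoo (a b : ℝ) (α : ℝ → ℝ) (c d : ℝ) : ℝ :=
  lLim a α d - rLim b α c

/-- `f` is a step function with respect to the partition `P`: it is constant on each
open subinterval `(x (i-1), x i)` of `P`. -/
def IsStepOn (a b : ℝ) (f : ℝ → ℝ) (P : RDSPartition a b) : Prop :=
  ∀ i, i < P.n → ∀ s ∈ Set.Ioo (P.x i) (P.x (i + 1)),
    f s = f ((P.x i + P.x (i + 1)) / 2)

/-- The RDS integral of a step function with respect to the partition `P`:
`Σ_{i=0}^n f(x_i) μ_α({x_i}) + Σ_{i=1}^n c_i μ_α(I_i)`. -/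
def stepInt (a b : ℝ) (α : ℝ → ℝ) (P : RDSPartition a b) (f : ℝ → ℝ) : ℝ :=
  (∑ i ∈ Finset.range (P.n + 1), f (P.x i) * muPt a b α (P.x i)) +
    ∑ i ∈ Finset.range P.n,
      f ((P.x i + P.x (i + 1)) / 2) * muIoo a b α (P.x i) (P.x (i + 1))

/-- Upper envelope: infimum of RDS step integrals of step functions above `f` on `[a,b]`. -/
def upperRDS (a b : ℝ) (α f : ℝ → ℝ) : ℝ :=
  sInf { r | ∃ (u : ℝ → ℝ) (P : RDSPartition a b), IsStepOn a b u P ∧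
    (∀ t ∈ Set.Icc a b, f t ≤ u t) ∧ r = stepInt a b α P u }

/-- Lower envelope: supremum of RDS step integrals of step functions below `f` on `[a,b]`. -/
def lowerRDS (a b : ℝ) (α f : ℝ → ℝ) : ℝ :=
  sSup { r | ∃ (v : ℝ → ℝ) (P : RDSPartition a b), IsStepOn a b v P ∧
    (∀ t ∈ Set.Icc a b, v t ≤ f t) ∧ r = stepInt a b α P v }

/-- RDS integrability with respect to an increasing integrator. -/
def RDSIntegrableInc (a b : ℝ) (α f : ℝ → ℝ) : Prop :=
  lowerRDS a b α f = upperRDS a b α f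

/-- The RDS integral with respect to an increasing integrator. -/
def RDSIntegralInc (a b : ℝ) (α f : ℝ → ℝ) : ℝ := upperRDS a b α f

/-- RDS integrability with respect to a BV integrator: some Jordan decomposition
into increasing functions works. -/
def RDSIntegrable (a b : ℝ) (α f : ℝ → ℝ) : Prop :=
  ∃ αp αm : ℝ → ℝ, MonotoneOn αp (Set.Icc a b) ∧ MonotoneOn αm (Set.Icc a b) ∧
    (∀ t ∈ Set.Icc a b, α t = αp t - αm t) ∧
    RDSIntegrableInc a b αp f ∧ RDSIntegrableInc a b αm f

/-- The RDS integral with respect to a BV integrator. -/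
def RDSIntegral (a b : ℝ) (α f : ℝ → ℝ) : ℝ :=
  if h : RDSIntegrable a b α f then
    RDSIntegralInc a b h.choose f - RDSIntegralInc a b h.choose_spec.choose f
  else 0

/-- `f` is bounded on `[a,b]`. -/
def BddOn (a b : ℝ) (f : ℝ → ℝ) : Prop :=
  ∃ M : ℝ, ∀ t ∈ Set.Icc a b, |f t| ≤ M

end
namespace RDSBCT

open MeasureTheory

/-! ### Clamp and extension -/

noncomputable def exte (a b : ℝ) (β : ℝ → ℝ) : ℝ → ℝ := fun t => β (max a (min b t))

lemma clamp_mem {a b : ℝ} (hab : a ≤ b) (t : ℝ) : max a (min b t) ∈ Set.Icc a b :=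
  ⟨le_max_left _ _, max_le hab (min_le_left _ _)⟩

lemma clamp_eq {a b t : ℝ} (ht : t ∈ Set.Icc a b) : max a (min b t) = t := by
  rw [min_eq_right ht.2, max_eq_right ht.1]

lemma exte_eq {a b : ℝ} (β : ℝ → ℝ) {t : ℝ} (ht : t ∈ Set.Icc a b) : exte a b β t = β t := by
  rw [exte, clamp_eq ht]

lemma exte_of_le {a b : ℝ} (hab : a ≤ b) (β : ℝ → ℝ) {t : ℝ} (ht : t ≤ a) :
    exte a b β t = β a := by
  rw [exte]; congr 1
  rw [min_eq_right (ht.trans hab), max_eq_left ht]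

lemma exte_of_ge {a b : ℝ} (hab : a ≤ b) (β : ℝ → ℝ) {t : ℝ} (ht : b ≤ t) :
    exte a b β t = β b := by
  rw [exte]; congr 1
  rw [min_eq_left ht, max_eq_right hab]

lemma exte_mono {a b : ℝ} (hab : a ≤ b) {β : ℝ → ℝ} (hβ : MonotoneOn β (Set.Icc a b)) :
    Monotone (exte a b β) := by
  intro s t hst
  exact hβ (clamp_mem hab s) (clamp_mem hab t)
    (max_le_max le_rfl (min_le_min le_rfl hst))

/-! ### The Stieltjes function and measure of an integrator -/

noncomputable def sf (a b : ℝ) (β : ℝ → ℝ) : StieltjesFunction ℝ :=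
  if h : Monotone (exte a b β) then h.stieltjesFunction else StieltjesFunction.id

noncomputable def smeas (a b : ℝ) (β : ℝ → ℝ) : Measure ℝ := (sf a b β).measure

lemma sf_apply {a b : ℝ} {β : ℝ → ℝ} (h : Monotone (exte a b β)) (x : ℝ) :
    sf a b β x = Function.rightLim (exte a b β) x := by
  rw [sf, dif_pos h]; rfl

lemma sf_eq_rLim {a b : ℝ} (hab : a < b) {β : ℝ → ℝ} (hβ : MonotoneOn β (Set.Icc a b))
    {x : ℝ} (hx : x ∈ Set.Icc a b) : sf a b β x = rLim b β x := by
  have h := exte_mono hab.le hβ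
  rw [sf_apply h, rLim]
  by_cases hxb : x < b
  · rw [if_pos hxb]
    have hev : (exte a b β) =ᶠ[𝓝[>] x] β := by
      filter_upwards [Ioo_mem_nhdsGT_of_mem (Set.mem_Ico.2 ⟨le_rfl, hxb⟩)] with y hy
      exact exte_eq β ⟨hx.1.trans hy.1.le, hy.2.le⟩
    have hT : Filter.Tendsto β (𝓝[>] x) (𝓝 (Function.rightLim (exte a b β) x)) :=
      (h.tendsto_rightLim x).congr' hev
    exact (rightLim_eq_of_tendsto hT).symm
  · rw [if_neg hxb]
    have hxb' : x = b := le_antisymm hx.2 (not_lt.1 hxb)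
    have hT : Filter.Tendsto (exte a b β) (𝓝[>] x) (𝓝 (β x)) := by
      apply Filter.Tendsto.congr' _ tendsto_const_nhds
      filter_upwards [self_mem_nhdsWithin] with y hy
      rw [hxb']
      exact (exte_of_ge hab.le β (hxb' ▸ hy.le)).symm
    exact rightLim_eq_of_tendsto hT


lemma leftLim_sf {a b : ℝ} {β : ℝ → ℝ} (h : Monotone (exte a b β)) (x : ℝ) :
    Function.leftLim (sf a b β) x = Function.leftLim (exte a b β) x := by
  have T2 : Filter.Tendsto (sf a b β) (𝓝[<] x) (𝓝 (Function.leftLim (exte a b β) x)) := by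
    apply tendsto_of_tendsto_of_tendsto_of_le_of_le' (h.tendsto_leftLim x) tendsto_const_nhds
    · filter_upwards [self_mem_nhdsWithin] with y _
      rw [sf_apply h]
      exact h.le_rightLim le_rfl
    · filter_upwards [self_mem_nhdsWithin] with y hy
      rw [sf_apply h]
      exact h.rightLim_le_leftLim hy
  exact leftLim_eq_of_tendsto T2

lemma sf_leftLim {a b : ℝ} (hab : a < b) {β : ℝ → ℝ} (hβ : MonotoneOn β (Set.Icc a b))
    {x : ℝ} (hx : x ∈ Set.Icc a b) : Function.leftLim (sf a b β) x = lLim a β x := by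
  have h := exte_mono hab.le hβ
  rw [leftLim_sf h, lLim]
  by_cases hax : a < x
  · rw [if_pos hax]
    have hev : (exte a b β) =ᶠ[𝓝[<] x] β := by
      filter_upwards [Ioo_mem_nhdsLT_of_mem (Set.mem_Ioc.2 ⟨hax, le_rfl⟩)] with y hy
      exact exte_eq β ⟨hy.1.le, hy.2.le.trans hx.2⟩
    exact (leftLim_eq_of_tendsto
      ((h.tendsto_leftLim x).congr' hev)).symm
  · rw [if_neg hax]
    have hxa : x = a := le_antisymm (not_lt.1 hax) hx.1
    have hT : Filter.Tendsto (exte a b β) (𝓝[<] x) (𝓝 (β x)) := by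
      apply Filter.Tendsto.congr' _ tendsto_const_nhds
      filter_upwards [self_mem_nhdsWithin] with y hy
      rw [hxa]
      exact (exte_of_le hab.le β (by rw [hxa] at hy; exact hy.le)).symm
    exact leftLim_eq_of_tendsto hT

/-! ### Measure values -/

lemma smeas_singleton {a b : ℝ} (hab : a < b) {β : ℝ → ℝ} (hβ : MonotoneOn β (Set.Icc a b))
    {t : ℝ} (ht : t ∈ Set.Icc a b) :
    smeas a b β {t} = ENNReal.ofReal (muPt a b β t) := by
  rw [smeas, StieltjesFunction.measure_singleton, sf_eq_rLim hab hβ ht, sf_leftLim hab hβ ht,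
    muPt]

lemma smeas_Ioo {a b : ℝ} (hab : a < b) {β : ℝ → ℝ} (hβ : MonotoneOn β (Set.Icc a b))
    {c d : ℝ} (hc : c ∈ Set.Icc a b) (hd : d ∈ Set.Icc a b) :
    smeas a b β (Set.Ioo c d) = ENNReal.ofReal (muIoo a b β c d) := by
  rw [smeas, StieltjesFunction.measure_Ioo, sf_eq_rLim hab hβ hc, sf_leftLim hab hβ hd,
    muIoo]

lemma smeas_Icc {a b : ℝ} (hab : a < b) {β : ℝ → ℝ} (hβ : MonotoneOn β (Set.Icc a b)) :
    smeas a b β (Set.Icc a b) = ENNReal.ofReal (β b - β a) := by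
  rw [smeas, StieltjesFunction.measure_Icc, sf_eq_rLim hab hβ (Set.right_mem_Icc.2 hab.le),
    sf_leftLim hab hβ (Set.left_mem_Icc.2 hab.le), rLim, if_neg (lt_irrefl b), lLim,
    if_neg (lt_irrefl a)]

lemma muPt_nonneg {a b : ℝ} (hab : a < b) {β : ℝ → ℝ} (hβ : MonotoneOn β (Set.Icc a b))
    {t : ℝ} (ht : t ∈ Set.Icc a b) : 0 ≤ muPt a b β t := by
  rw [muPt, ← sf_eq_rLim hab hβ ht, ← sf_leftLim hab hβ ht, sub_nonneg]
  exact (sf a b β).mono.leftLim_le le_rfl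

lemma muIoo_nonneg {a b : ℝ} (hab : a < b) {β : ℝ → ℝ} (hβ : MonotoneOn β (Set.Icc a b))
    {c d : ℝ} (hc : c ∈ Set.Icc a b) (hd : d ∈ Set.Icc a b) (hcd : c < d) :
    0 ≤ muIoo a b β c d := by
  rw [muIoo, ← sf_eq_rLim hab hβ hc, ← sf_leftLim hab hβ hd, sub_nonneg]
  exact (sf a b β).mono.le_leftLim hcd

lemma smeas_singleton_toReal {a b : ℝ} (hab : a < b) {β : ℝ → ℝ}
    (hβ : MonotoneOn β (Set.Icc a b)) {t : ℝ} (ht : t ∈ Set.Icc a b) :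
    (smeas a b β {t}).toReal = muPt a b β t := by
  rw [smeas_singleton hab hβ ht, ENNReal.toReal_ofReal (muPt_nonneg hab hβ ht)]

lemma smeas_Ioo_toReal {a b : ℝ} (hab : a < b) {β : ℝ → ℝ}
    (hβ : MonotoneOn β (Set.Icc a b)) {c d : ℝ} (hc : c ∈ Set.Icc a b) (hd : d ∈ Set.Icc a b)
    (hcd : c < d) : (smeas a b β (Set.Ioo c d)).toReal = muIoo a b β c d := by
  rw [smeas_Ioo hab hβ hc hd, ENNReal.toReal_ofReal (muIoo_nonneg hab hβ hc hd hcd)]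

lemma smeas_Icc_lt_top {a b : ℝ} (hab : a < b) {β : ℝ → ℝ}
    (hβ : MonotoneOn β (Set.Icc a b)) : smeas a b β (Set.Icc a b) < ⊤ := by
  rw [smeas_Icc hab hβ]; exact ENNReal.ofReal_lt_top

lemma isFiniteMeasure_restrict {a b : ℝ} (hab : a < b) {β : ℝ → ℝ}
    (hβ : MonotoneOn β (Set.Icc a b)) :
    IsFiniteMeasure ((smeas a b β).restrict (Set.Icc a b)) := by
  constructor
  rw [Measure.restrict_apply_univ]
  exact smeas_Icc_lt_top hab hβ

lemma smeas_congr {a b : ℝ} (hab : a ≤ b) {β γ : ℝ → ℝ} (h : Set.EqOn β γ (Set.Icc a b)) :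
    smeas a b β = smeas a b γ := by
  have he : exte a b β = exte a b γ := funext fun t => h (clamp_mem hab t)
  rw [smeas, smeas, sf, sf, he]

lemma smeas_add {a b : ℝ} (hab : a ≤ b) {β γ : ℝ → ℝ} (hβ : MonotoneOn β (Set.Icc a b))
    (hγ : MonotoneOn γ (Set.Icc a b)) :
    smeas a b (fun t => β t + γ t) = smeas a b β + smeas a b γ := by
  have hb := exte_mono hab hβ
  have hg := exte_mono hab hγ
  have hbg : Monotone (exte a b (fun t => β t + γ t)) := by
    have : exte a b (fun t => β t + γ t) = fun t => exte a b β t + exte a b γ t := rfl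
    rw [this]; exact hb.add hg
  have hsf : sf a b (fun t => β t + γ t) = sf a b β + sf a b γ := by
    apply StieltjesFunction.ext
    intro x
    rw [StieltjesFunction.add_apply, sf_apply hb, sf_apply hg, sf_apply hbg]
    apply rightLim_eq_of_tendsto
    exact (hb.tendsto_rightLim x).add (hg.tendsto_rightLim x)
  rw [smeas, smeas, smeas, hsf, StieltjesFunction.measure_add]
/-! ### Partitions and step functions -/

lemma px_le {a b : ℝ} (P : RDSPartition a b) {i j : ℕ} (hij : i ≤ j) (hj : j ≤ P.n) :
    P.x i ≤ P.x j := by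
  induction j, hij using Nat.le_induction with
  | base => exact le_rfl
  | succ j hij ih =>
    exact (ih (le_trans (Nat.le_succ j) hj)).trans (P.mono j (by omega)).le

lemma px_mem {a b : ℝ} (P : RDSPartition a b) {i : ℕ} (hi : i ≤ P.n) :
    P.x i ∈ Set.Icc a b := by
  exact ⟨P.first.ge.trans (px_le P (Nat.zero_le i) hi), (px_le P hi le_rfl).trans P.last.le⟩

lemma step_key {a b : ℝ} (hab : a < b) {β : ℝ → ℝ} (hβ : MonotoneOn β (Set.Icc a b))
    {u : ℝ → ℝ} {P : RDSPartition a b} (hu : IsStepOn a b u P) (k : ℕ) (hk : k ≤ P.n) :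
    IntegrableOn u (Set.Icc a (P.x k)) (smeas a b β) ∧
    ∫ t in Set.Icc a (P.x k), u t ∂(smeas a b β) =
      (∑ i ∈ Finset.range (k + 1), u (P.x i) * muPt a b β (P.x i)) +
      ∑ i ∈ Finset.range k, u ((P.x i + P.x (i + 1)) / 2) * muIoo a b β (P.x i) (P.x (i + 1)) := by
  induction k with
  | zero =>
    rw [P.first, Set.Icc_self]
    have hmem : a ∈ Set.Icc a b := Set.left_mem_Icc.2 hab.le
    have hlt : smeas a b β {a} < ⊤ := by
      rw [smeas_singleton hab hβ hmem]; exact ENNReal.ofReal_lt_top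
    have heq : Set.EqOn u (fun _ => u a) {a} := by
      intro t ht; rw [Set.mem_singleton_iff] at ht; rw [ht]
    constructor
    · exact (integrableOn_const hlt.ne).congr_fun heq.symm
        (measurableSet_singleton a)
    · rw [setIntegral_congr_fun (measurableSet_singleton a) heq, setIntegral_const,
        Finset.sum_range_one, Finset.sum_range_zero, smul_eq_mul,
        measureReal_def, smeas_singleton_toReal hab hβ hmem, P.first, add_zero, mul_comm]
  | succ k ih =>
    have hk' : k ≤ P.n := le_trans (Nat.le_succ k) hk
    have hklt : k < P.n := hk
    obtain ⟨ih1, ih2⟩ := ih hk'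
    have hxk := px_mem P hk'
    have hxk1 := px_mem P hk
    have hkk1 : P.x k < P.x (k + 1) := P.mono k hklt
    -- decompose the interval
    have hdec1 : Set.Icc a (P.x k) ∪ Set.Ioc (P.x k) (P.x (k+1)) = Set.Icc a (P.x (k+1)) :=
      Set.Icc_union_Ioc_eq_Icc hxk.1 hkk1.le
    have hdec2 : Set.Ioo (P.x k) (P.x (k+1)) ∪ {P.x (k+1)} = Set.Ioc (P.x k) (P.x (k+1)) := by
      rw [← Set.Icc_self (P.x (k+1))]
      exact Set.Ioo_union_Icc_eq_Ioc hkk1 le_rfl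
    have hd1 : Disjoint (Set.Icc a (P.x k)) (Set.Ioc (P.x k) (P.x (k+1))) := by
      rw [Set.disjoint_left]; intro t ht1 ht2; exact absurd ht1.2 (not_le.2 ht2.1)
    have hd2 : Disjoint (Set.Ioo (P.x k) (P.x (k+1))) ({P.x (k+1)} : Set ℝ) := by
      rw [Set.disjoint_left]; intro t ht1 ht2
      rw [Set.mem_singleton_iff] at ht2; exact absurd ht2 (ne_of_lt ht1.2)
    -- integrability and value on the open piece
    set c : ℝ := u ((P.x k + P.x (k + 1)) / 2) with hc
    have hconst : Set.EqOn u (fun _ => c) (Set.Ioo (P.x k) (P.x (k+1))) := by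
      intro t ht; exact hu k hklt t ht
    have hlt1 : smeas a b β (Set.Ioo (P.x k) (P.x (k+1))) < ⊤ := by
      rw [smeas_Ioo hab hβ hxk hxk1]; exact ENNReal.ofReal_lt_top
    have hint_open : IntegrableOn u (Set.Ioo (P.x k) (P.x (k+1))) (smeas a b β) :=
      (integrableOn_const hlt1.ne).congr_fun hconst.symm measurableSet_Ioo
    have hval_open : ∫ t in Set.Ioo (P.x k) (P.x (k+1)), u t ∂(smeas a b β) =
        c * muIoo a b β (P.x k) (P.x (k+1)) := by
      rw [setIntegral_congr_fun measurableSet_Ioo hconst, setIntegral_const, smul_eq_mul,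
        measureReal_def, smeas_Ioo_toReal hab hβ hxk hxk1 hkk1, mul_comm]
    -- integrability and value on the singleton
    have hlt2 : smeas a b β {P.x (k+1)} < ⊤ := by
      rw [smeas_singleton hab hβ hxk1]; exact ENNReal.ofReal_lt_top
    have heq1 : Set.EqOn u (fun _ => u (P.x (k+1))) {P.x (k+1)} := by
      intro t ht; rw [Set.mem_singleton_iff] at ht; rw [ht]
    have hint_pt : IntegrableOn u ({P.x (k+1)} : Set ℝ) (smeas a b β) :=
      (integrableOn_const hlt2.ne).congr_fun heq1.symm (measurableSet_singleton _)
    have hval_pt : ∫ t in ({P.x (k+1)} : Set ℝ), u t ∂(smeas a b β) =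
        u (P.x (k+1)) * muPt a b β (P.x (k+1)) := by
      rw [setIntegral_congr_fun (measurableSet_singleton _) heq1, setIntegral_const,
        smul_eq_mul, measureReal_def, smeas_singleton_toReal hab hβ hxk1, mul_comm]
    -- combine
    have hint_Ioc : IntegrableOn u (Set.Ioc (P.x k) (P.x (k+1))) (smeas a b β) := by
      rw [← hdec2]; exact hint_open.union hint_pt
    have hval_Ioc : ∫ t in Set.Ioc (P.x k) (P.x (k+1)), u t ∂(smeas a b β) =
        c * muIoo a b β (P.x k) (P.x (k+1)) + u (P.x (k+1)) * muPt a b β (P.x (k+1)) := by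
      rw [← hdec2, setIntegral_union hd2 (measurableSet_singleton _) hint_open hint_pt,
        hval_open, hval_pt]
    constructor
    · rw [← hdec1]; exact ih1.union hint_Ioc
    · rw [← hdec1, setIntegral_union hd1 measurableSet_Ioc ih1 hint_Ioc, ih2, hval_Ioc,
        Finset.sum_range_succ (fun i => u (P.x i) * muPt a b β (P.x i)) (k+1),
        Finset.sum_range_succ
          (fun i => u ((P.x i + P.x (i + 1)) / 2) * muIoo a b β (P.x i) (P.x (i + 1))) k]
      ring

lemma step_repr {a b : ℝ} (hab : a < b) {β : ℝ → ℝ} (hβ : MonotoneOn β (Set.Icc a b))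
    {u : ℝ → ℝ} {P : RDSPartition a b} (hu : IsStepOn a b u P) :
    IntegrableOn u (Set.Icc a b) (smeas a b β) ∧
    ∫ t in Set.Icc a b, u t ∂(smeas a b β) = stepInt a b β P u := by
  have h := step_key hab hβ hu P.n le_rfl
  rw [P.last] at h
  exact ⟨h.1, h.2.trans rfl⟩
lemma step_meas_aux {a b : ℝ} {u : ℝ → ℝ} {P : RDSPartition a b}
    (hu : IsStepOn a b u P) (k : ℕ) (hk : k ≤ P.n) :
    Measurable ((Set.Icc a (P.x k)).indicator u) := by
  induction k with
  | zero =>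
    rw [P.first, Set.Icc_self]
    have : ({a} : Set ℝ).indicator u = ({a} : Set ℝ).indicator (fun _ => u a) := by
      apply Set.indicator_congr
      intro t ht; rw [Set.mem_singleton_iff] at ht; rw [ht]
    rw [this]
    exact measurable_const.indicator (measurableSet_singleton a)
  | succ k ih =>
    have hk' : k ≤ P.n := le_trans (Nat.le_succ k) hk
    have hklt : k < P.n := hk
    have hkk1 : P.x k < P.x (k + 1) := P.mono k hklt
    have hxk := px_mem P hk'
    have hdec1 : Set.Icc a (P.x k) ∪ Set.Ioc (P.x k) (P.x (k+1)) = Set.Icc a (P.x (k+1)) :=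
      Set.Icc_union_Ioc_eq_Icc hxk.1 hkk1.le
    have hdec2 : Set.Ioo (P.x k) (P.x (k+1)) ∪ {P.x (k+1)} = Set.Ioc (P.x k) (P.x (k+1)) := by
      rw [← Set.Icc_self (P.x (k+1))]
      exact Set.Ioo_union_Icc_eq_Ioc hkk1 le_rfl
    have hd1 : Disjoint (Set.Icc a (P.x k)) (Set.Ioc (P.x k) (P.x (k+1))) := by
      rw [Set.disjoint_left]; intro t ht1 ht2; exact absurd ht1.2 (not_le.2 ht2.1)
    have hd2 : Disjoint (Set.Ioo (P.x k) (P.x (k+1))) ({P.x (k+1)} : Set ℝ) := by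
      rw [Set.disjoint_left]; intro t ht1 ht2
      rw [Set.mem_singleton_iff] at ht2; exact absurd ht2 (ne_of_lt ht1.2)
    have m1 : Measurable ((Set.Ioo (P.x k) (P.x (k+1))).indicator u) := by
      have : (Set.Ioo (P.x k) (P.x (k+1))).indicator u =
          (Set.Ioo (P.x k) (P.x (k+1))).indicator (fun _ => u ((P.x k + P.x (k + 1)) / 2)) :=
        Set.indicator_congr (fun t ht => hu k hklt t ht)
      rw [this]
      exact measurable_const.indicator measurableSet_Ioo
    have m2 : Measurable (({P.x (k+1)} : Set ℝ).indicator u) := by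
      have : ({P.x (k+1)} : Set ℝ).indicator u =
          ({P.x (k+1)} : Set ℝ).indicator (fun _ => u (P.x (k+1))) := by
        apply Set.indicator_congr
        intro t ht; rw [Set.mem_singleton_iff] at ht; rw [ht]
      rw [this]
      exact measurable_const.indicator (measurableSet_singleton _)
    have m3 : Measurable ((Set.Ioc (P.x k) (P.x (k+1))).indicator u) := by
      rw [← hdec2, Set.indicator_union_of_disjoint hd2]
      exact m1.add m2
    rw [← hdec1, Set.indicator_union_of_disjoint hd1]
    exact (ih hk').add m3

lemma step_meas {a b : ℝ} {u : ℝ → ℝ} {P : RDSPartition a b} (hu : IsStepOn a b u P) :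
    Measurable ((Set.Icc a b).indicator u) := by
  have h := step_meas_aux hu P.n le_rfl
  rwa [P.last] at h
lemma repr_int {a b : ℝ} (hab : a < b) {β : ℝ → ℝ} (hβ : MonotoneOn β (Set.Icc a b))
    {f : ℝ → ℝ} {M : ℝ} (hbd : ∀ t ∈ Set.Icc a b, |f t| ≤ M)
    (hint : RDSIntegrableInc a b β f) :
    IntegrableOn f (Set.Icc a b) (smeas a b β) ∧
    ∫ t in Set.Icc a b, f t ∂(smeas a b β) = upperRDS a b β f := by
  have hM0 : 0 ≤ M := (abs_nonneg _).trans (hbd a (Set.left_mem_Icc.2 hab.le))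
  set μ := smeas a b β with hμ
  haveI := isFiniteMeasure_restrict hab hβ
  let P0 : RDSPartition a b :=
    { n := 1
      x := fun i => if i = 0 then a else b
      mono := by intro i hi; interval_cases i; simpa using hab
      first := by simp
      last := by simp }
  set SU := { r | ∃ (u : ℝ → ℝ) (P : RDSPartition a b), IsStepOn a b u P ∧
    (∀ t ∈ Set.Icc a b, f t ≤ u t) ∧ r = stepInt a b β P u } with hSU
  set SL := { r | ∃ (v : ℝ → ℝ) (P : RDSPartition a b), IsStepOn a b v P ∧
    (∀ t ∈ Set.Icc a b, v t ≤ f t) ∧ r = stepInt a b β P v } with hSL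
  have hU_eq : upperRDS a b β f = sInf SU := rfl
  have hL_eq : lowerRDS a b β f = sSup SL := rfl
  have hUne : SU.Nonempty :=
    ⟨stepInt a b β P0 (fun _ => M), fun _ => M, P0, fun i hi s hs => rfl,
      fun t ht => (abs_le.1 (hbd t ht)).2, rfl⟩
  have hLne : SL.Nonempty :=
    ⟨stepInt a b β P0 (fun _ => -M), fun _ => -M, P0, fun i hi s hs => rfl,
      fun t ht => (abs_le.1 (hbd t ht)).1, rfl⟩
  have hcomp : ∀ r ∈ SL, ∀ r' ∈ SU, r ≤ r' := by
    rintro r ⟨v, Pv, hv, hvf, rfl⟩ r' ⟨w, Pw, hw, hfw, rfl⟩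
    obtain ⟨hvi, hve⟩ := step_repr hab hβ hv
    obtain ⟨hwi, hwe⟩ := step_repr hab hβ hw
    rw [← hve, ← hwe]
    exact setIntegral_mono_on hvi hwi measurableSet_Icc
      (fun t ht => (hvf t ht).trans (hfw t ht))
  obtain ⟨ru, hru⟩ := hUne
  obtain ⟨rl, hrl⟩ := hLne
  have hbddB : BddBelow SU := ⟨rl, fun r hr => hcomp rl hrl r hr⟩
  have hbddA : BddAbove SL := ⟨ru, fun r hr => hcomp r hr ru hru⟩
  set I := sInf SU with hIdef
  have hLI : sSup SL = I := hint
  have keyU : ∀ ε : ℝ, 0 < ε → ∃ u : ℝ → ℝ,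
      (∀ t ∈ Set.Icc a b, f t ≤ u t) ∧ (∀ t, |u t| ≤ M) ∧
      Measurable ((Set.Icc a b).indicator u) ∧ IntegrableOn u (Set.Icc a b) μ ∧
      I ≤ ∫ t in Set.Icc a b, u t ∂μ ∧ ∫ t in Set.Icc a b, u t ∂μ < I + ε := by
    intro ε hε
    obtain ⟨r, hrSU, hrlt⟩ := exists_lt_of_csInf_lt ⟨ru, hru⟩ (lt_add_of_pos_right I hε)
    obtain ⟨w, Pw, hw, hfw, rfl⟩ := hrSU
    set u : ℝ → ℝ := fun t => max (-M) (min M (w t)) with hu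
    have hustep : IsStepOn a b u Pw := by
      intro i hi s hs
      simp only [hu]; rw [hw i hi s hs]
    have hfu : ∀ t ∈ Set.Icc a b, f t ≤ u t := fun t ht =>
      le_max_of_le_right (le_min (abs_le.1 (hbd t ht)).2 (hfw t ht))
    have hubd : ∀ t, |u t| ≤ M := by
      intro t
      rw [abs_le]
      exact ⟨le_max_left _ _, max_le (neg_le_self hM0) (min_le_left _ _)⟩
    have huw : ∀ t ∈ Set.Icc a b, u t ≤ w t := fun t ht =>
      max_le (le_trans (abs_le.1 (hbd t ht)).1 (hfw t ht)) (min_le_right _ _)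
    obtain ⟨hui, hue⟩ := step_repr hab hβ hustep
    obtain ⟨hwi, hwe⟩ := step_repr hab hβ hw
    have hmem : stepInt a b β Pw u ∈ SU := ⟨u, Pw, hustep, hfu, rfl⟩
    refine ⟨u, hfu, hubd, step_meas hustep, hui, ?_, ?_⟩
    · rw [hue]; exact csInf_le hbddB hmem
    · exact lt_of_le_of_lt
        ((setIntegral_mono_on hui hwi measurableSet_Icc huw).trans hwe.le) hrlt
  have keyL : ∀ ε : ℝ, 0 < ε → ∃ v : ℝ → ℝ,
      (∀ t ∈ Set.Icc a b, v t ≤ f t) ∧ (∀ t, |v t| ≤ M) ∧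
      Measurable ((Set.Icc a b).indicator v) ∧ IntegrableOn v (Set.Icc a b) μ ∧
      ∫ t in Set.Icc a b, v t ∂μ ≤ I ∧ I - ε < ∫ t in Set.Icc a b, v t ∂μ := by
    intro ε hε
    have h1 : I - ε < sSup SL := by rw [hLI]; linarith
    obtain ⟨r, hrSL, hrlt⟩ := exists_lt_of_lt_csSup ⟨rl, hrl⟩ h1
    obtain ⟨w, Pw, hw, hwf, rfl⟩ := hrSL
    set v : ℝ → ℝ := fun t => min M (max (-M) (w t)) with hv
    have hvstep : IsStepOn a b v Pw := by
      intro i hi s hs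
      simp only [hv]; rw [hw i hi s hs]
    have hvf : ∀ t ∈ Set.Icc a b, v t ≤ f t := fun t ht =>
      min_le_of_right_le (max_le (abs_le.1 (hbd t ht)).1 (hwf t ht))
    have hvbd : ∀ t, |v t| ≤ M := by
      intro t
      rw [abs_le]
      exact ⟨le_min (neg_le_self hM0) (le_max_left _ _), min_le_left _ _⟩
    have hwv : ∀ t ∈ Set.Icc a b, w t ≤ v t := fun t ht =>
      le_min (le_trans (hwf t ht) (abs_le.1 (hbd t ht)).2) (le_max_right _ _)
    obtain ⟨hvi, hve⟩ := step_repr hab hβ hvstep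
    obtain ⟨hwi, hwe⟩ := step_repr hab hβ hw
    have hmem : stepInt a b β Pw v ∈ SL := ⟨v, Pw, hvstep, hvf, rfl⟩
    refine ⟨v, hvf, hvbd, step_meas hvstep, hvi, ?_, ?_⟩
    · rw [hve, ← hLI]; exact le_csSup hbddA hmem
    · exact lt_of_lt_of_le hrlt
        (hwe.symm.le.trans (setIntegral_mono_on hwi hvi measurableSet_Icc hwv))
  have keyU' := fun k : ℕ => keyU (1/(k+1)) (by positivity)
  have keyL' := fun k : ℕ => keyL (1/(k+1)) (by positivity)
  choose uu hufu hubd humeas hui huI hult using keyU'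
  choose vv hvfv hvbd hvmeas hvi hvI hvlt using keyL'
  set F : ℕ → ℝ → ℝ := fun k => (Set.Icc a b).indicator (uu k) with hF
  set G : ℕ → ℝ → ℝ := fun k => (Set.Icc a b).indicator (vv k) with hG
  have hFbd : ∀ k t, |F k t| ≤ M := by
    intro k t
    by_cases ht : t ∈ Set.Icc a b
    · simp only [hF, Set.indicator_of_mem ht]; exact hubd k t
    · simp only [hF, Set.indicator_of_notMem ht, abs_zero]; exact hM0
  have hGbd : ∀ k t, |G k t| ≤ M := by
    intro k t
    by_cases ht : t ∈ Set.Icc a b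
    · simp only [hG, Set.indicator_of_mem ht]; exact hvbd k t
    · simp only [hG, Set.indicator_of_notMem ht, abs_zero]; exact hM0
  set U : ℝ → ℝ := fun t => ⨅ k, F k t with hUdef
  set V : ℝ → ℝ := fun t => ⨆ k, G k t with hVdef
  have hUmeas : Measurable U := Measurable.iInf humeas
  have hVmeas : Measurable V := Measurable.iSup hvmeas
  have hbddb : ∀ t, BddBelow (Set.range fun k => F k t) := fun t =>
    ⟨-M, by rintro y ⟨k, rfl⟩; exact (abs_le.1 (hFbd k t)).1⟩
  have hbdda : ∀ t, BddAbove (Set.range fun k => G k t) := fun t =>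
    ⟨M, by rintro y ⟨k, rfl⟩; exact (abs_le.1 (hGbd k t)).2⟩
  have hUbd : ∀ t, |U t| ≤ M := fun t => abs_le.2
    ⟨le_ciInf fun k => (abs_le.1 (hFbd k t)).1,
     le_trans (ciInf_le (hbddb t) 0) (abs_le.1 (hFbd 0 t)).2⟩
  have hVbd : ∀ t, |V t| ≤ M := fun t => abs_le.2
    ⟨le_trans (abs_le.1 (hGbd 0 t)).1 (le_ciSup (hbdda t) 0),
     ciSup_le fun k => (abs_le.1 (hGbd k t)).2⟩
  have hfU : ∀ t ∈ Set.Icc a b, f t ≤ U t := fun t ht =>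
    le_ciInf fun k => by simp only [hF, Set.indicator_of_mem ht]; exact hufu k t ht
  have hVf : ∀ t ∈ Set.Icc a b, V t ≤ f t := fun t ht =>
    ciSup_le fun k => by simp only [hG, Set.indicator_of_mem ht]; exact hvfv k t ht
  have hUF : ∀ k t, U t ≤ F k t := fun k t => ciInf_le (hbddb t) k
  have hGV : ∀ k t, G k t ≤ V t := fun k t => le_ciSup (hbdda t) k
  have hbint : ∀ h : ℝ → ℝ, Measurable h → (∀ t, |h t| ≤ M) →
      Integrable h (μ.restrict (Set.Icc a b)) := fun h hm hb =>
    Integrable.mono' (integrable_const M) hm.aestronglyMeasurable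
      (Filter.Eventually.of_forall fun t => by rw [Real.norm_eq_abs]; exact hb t)
  have hUint := hbint U hUmeas hUbd
  have hVint := hbint V hVmeas hVbd
  have hFint : ∀ k, Integrable (F k) (μ.restrict (Set.Icc a b)) := fun k =>
    hbint _ (humeas k) (hFbd k)
  have hGint : ∀ k, Integrable (G k) (μ.restrict (Set.Icc a b)) := fun k =>
    hbint _ (hvmeas k) (hGbd k)
  have hFeq : ∀ k, ∫ t in Set.Icc a b, F k t ∂μ = ∫ t in Set.Icc a b, uu k t ∂μ := fun k =>
    setIntegral_congr_fun measurableSet_Icc (fun t ht => Set.indicator_of_mem ht _)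
  have hGeq : ∀ k, ∫ t in Set.Icc a b, G k t ∂μ = ∫ t in Set.Icc a b, vv k t ∂μ := fun k =>
    setIntegral_congr_fun measurableSet_Icc (fun t ht => Set.indicator_of_mem ht _)
  have hUleI : ∫ t in Set.Icc a b, U t ∂μ ≤ I := by
    apply le_of_forall_pos_le_add
    intro ε hε
    obtain ⟨k, hk⟩ := exists_nat_one_div_lt hε
    calc ∫ t in Set.Icc a b, U t ∂μ
        ≤ ∫ t in Set.Icc a b, F k t ∂μ :=
          integral_mono hUint (hFint k) (fun t => hUF k t)
      _ = ∫ t in Set.Icc a b, uu k t ∂μ := hFeq k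
      _ ≤ I + 1/(k+1) := (hult k).le
      _ ≤ I + ε := by linarith
  have hIleV : I ≤ ∫ t in Set.Icc a b, V t ∂μ := by
    apply le_of_forall_pos_le_add
    intro ε hε
    obtain ⟨k, hk⟩ := exists_nat_one_div_lt hε
    have h1 : I - 1/(k+1) < ∫ t in Set.Icc a b, vv k t ∂μ := hvlt k
    have h2 : ∫ t in Set.Icc a b, vv k t ∂μ ≤ ∫ t in Set.Icc a b, V t ∂μ := by
      rw [← hGeq k]
      exact integral_mono (hGint k) hVint (fun t => hGV k t)
    linarith
  have hVleU : ∫ t in Set.Icc a b, V t ∂μ ≤ ∫ t in Set.Icc a b, U t ∂μ :=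
    setIntegral_mono_on hVint hUint measurableSet_Icc
      (fun t ht => (hVf t ht).trans (hfU t ht))
  have hUI : ∫ t in Set.Icc a b, U t ∂μ = I := le_antisymm hUleI (hIleV.trans hVleU)
  have hVI : ∫ t in Set.Icc a b, V t ∂μ = I := le_antisymm (hVleU.trans hUleI) hIleV
  have hsub_nonneg : 0 ≤ᵐ[μ.restrict (Set.Icc a b)] fun t => U t - V t := by
    filter_upwards [ae_restrict_mem measurableSet_Icc] with t ht
    exact sub_nonneg.2 ((hVf t ht).trans (hfU t ht))
  have hzero : ∫ t in Set.Icc a b, (U t - V t) ∂μ = 0 := by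
    rw [integral_sub hUint hVint, hUI, hVI, sub_self]
  have haeeq : (fun t => U t - V t) =ᵐ[μ.restrict (Set.Icc a b)] 0 :=
    (integral_eq_zero_iff_of_nonneg_ae hsub_nonneg (hUint.sub hVint)).1 hzero
  have hfae : f =ᵐ[μ.restrict (Set.Icc a b)] U := by
    filter_upwards [haeeq, ae_restrict_mem measurableSet_Icc] with t h1 h2
    have h1' : U t - V t = 0 := h1
    have h3 : U t = V t := by linarith
    exact le_antisymm (hfU t h2) (h3.le.trans (hVf t h2))
  constructor
  · exact hUint.congr hfae.symm
  · rw [integral_congr_ae hfae, hUI, hU_eq]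
lemma eVariationOn_sub_le (p m : ℝ → ℝ) (s : Set ℝ) :
    eVariationOn (fun x => p x - m x) s ≤ eVariationOn p s + eVariationOn m s := by
  apply iSup_le
  rintro ⟨n, u, hu, us⟩
  have hpt : ∀ i : ℕ, edist (p (u (i+1)) - m (u (i+1))) (p (u i) - m (u i)) ≤
      edist (p (u (i+1))) (p (u i)) + edist (m (u (i+1))) (m (u i)) := by
    intro i
    rw [edist_dist, edist_dist, edist_dist]
    exact le_trans (ENNReal.ofReal_le_ofReal (dist_sub_sub_le _ _ _ _))
      ENNReal.ofReal_add_le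
  calc ∑ i ∈ Finset.range n,
        edist ((fun x => p x - m x) (u (i+1))) ((fun x => p x - m x) (u i))
      ≤ ∑ i ∈ Finset.range n,
          (edist (p (u (i+1))) (p (u i)) + edist (m (u (i+1))) (m (u i))) :=
        Finset.sum_le_sum fun i _ => hpt i
    _ = (∑ i ∈ Finset.range n, edist (p (u (i+1))) (p (u i))) +
          ∑ i ∈ Finset.range n, edist (m (u (i+1))) (m (u i)) := Finset.sum_add_distrib
    _ ≤ _ := add_le_add (eVariationOn.sum_le (f := p) (n := n) hu us) (eVariationOn.sum_le (f := m) (n := n) hu us)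
end RDSBCT

open RDSBCT MeasureTheory

theorem stmt19 (a b : ℝ) (hab : a < b) (α : ℝ → ℝ)
    (hα : BoundedVariationOn α (Set.Icc a b)) (f : ℕ → ℝ → ℝ) (g : ℝ → ℝ) (M : ℝ)
    (hM : ∀ n, ∀ t ∈ Set.Icc a b, |f n t| ≤ M)
    (hfi : ∀ n, RDSIntegrable a b α (f n))
    (hptwise : ∀ t ∈ Set.Icc a b, Tendsto (fun n => f n t) atTop (𝓝 (g t)))
    (hg : RDSIntegrable a b α g) :
    Tendsto (fun n => RDSIntegral a b α (f n)) atTop (𝓝 (RDSIntegral a b α g)) := by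
  have hmem_a : a ∈ Set.Icc a b := Set.left_mem_Icc.2 hab.le
  have hM0 : 0 ≤ M := (abs_nonneg _).trans (hM 0 a hmem_a)
  have hgM : ∀ t ∈ Set.Icc a b, |g t| ≤ M := fun t ht =>
    le_of_tendsto ((hptwise t ht).abs) (Filter.Eventually.of_forall fun n => hM n t ht)
  have hloc : LocallyBoundedVariationOn α (Set.Icc a b) := hα.locallyBoundedVariationOn
  set Vr : ℝ → ℝ := variationOnFromTo α (Set.Icc a b) a with hVr
  set Pp : ℝ → ℝ := fun t => (Vr t + α t) / 2 with hPp
  set Qq : ℝ → ℝ := fun t => (Vr t - α t) / 2 with hQq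
  have hVdiff : ∀ s ∈ Set.Icc a b, ∀ t ∈ Set.Icc a b, s ≤ t →
      Vr t - Vr s = (eVariationOn α (Set.Icc a b ∩ Set.Icc s t)).toReal := by
    intro s hs t ht hst
    have h1 := variationOnFromTo.add hloc hmem_a hs ht
    simp only [hVr]
    rw [← h1, variationOnFromTo.eq_of_le α _ hst]
    ring
  have habs : ∀ s ∈ Set.Icc a b, ∀ t ∈ Set.Icc a b, s ≤ t →
      α t - α s ≤ Vr t - Vr s ∧ α s - α t ≤ Vr t - Vr s := by
    intro s hs t ht hst
    rw [hVdiff s hs t ht hst]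
    have hbv : BoundedVariationOn α (Set.Icc a b ∩ Set.Icc s t) :=
      hα.mono Set.inter_subset_left
    have hsmem : s ∈ Set.Icc a b ∩ Set.Icc s t := ⟨hs, Set.left_mem_Icc.2 hst⟩
    have htmem : t ∈ Set.Icc a b ∩ Set.Icc s t := ⟨ht, Set.right_mem_Icc.2 hst⟩
    exact ⟨hbv.sub_le htmem hsmem, hbv.sub_le hsmem htmem⟩
  have hPmono : MonotoneOn Pp (Set.Icc a b) := by
    intro s hs t ht hst
    obtain ⟨h1, h2⟩ := habs s hs t ht hst
    simp only [hPp]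
    linarith
  have hQmono : MonotoneOn Qq (Set.Icc a b) := by
    intro s hs t ht hst
    obtain ⟨h1, h2⟩ := habs s hs t ht hst
    simp only [hQq]
    linarith
  have hPQ : ∀ t, Pp t - Qq t = α t := fun t => by simp only [hPp, hQq]; ring
  have hmin : ∀ p m : ℝ → ℝ, MonotoneOn p (Set.Icc a b) → MonotoneOn m (Set.Icc a b) →
      (∀ t ∈ Set.Icc a b, α t = p t - m t) →
      MonotoneOn (fun t => p t - Pp t) (Set.Icc a b) := by
    intro p m hp hm hpm s hs t ht hst
    have hsum : Vr t - Vr s ≤ (p t - p s) + (m t - m s) := by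
      rw [hVdiff s hs t ht hst]
      have e1 : eVariationOn α (Set.Icc a b ∩ Set.Icc s t) =
          eVariationOn (fun x => p x - m x) (Set.Icc a b ∩ Set.Icc s t) :=
        eVariationOn.eq_of_eqOn (fun x hx => hpm x hx.1)
      have e2 := eVariationOn_sub_le p m (Set.Icc a b ∩ Set.Icc s t)
      have e3 := hp.eVariationOn_le hs ht
      have e4 := hm.eVariationOn_le hs ht
      have e5 : eVariationOn α (Set.Icc a b ∩ Set.Icc s t) ≤
          ENNReal.ofReal (p t - p s) + ENNReal.ofReal (m t - m s) := by
        rw [e1]; exact e2.trans (add_le_add e3 e4)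
      have hne : ENNReal.ofReal (p t - p s) + ENNReal.ofReal (m t - m s) ≠ ⊤ :=
        ENNReal.add_ne_top.2 ⟨ENNReal.ofReal_ne_top, ENNReal.ofReal_ne_top⟩
      have e6 := ENNReal.toReal_mono hne e5
      rw [ENNReal.toReal_add ENNReal.ofReal_ne_top ENNReal.ofReal_ne_top,
        ENNReal.toReal_ofReal (sub_nonneg.2 (hp hs ht hst)),
        ENNReal.toReal_ofReal (sub_nonneg.2 (hm hs ht hst))] at e6
      exact e6
    have h2s := hpm s hs
    have h2t := hpm t ht
    simp only [hPp]
    linarith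
  -- representation of the RDS integral via the fixed measures
  have rep : ∀ φ : ℝ → ℝ, (∀ t ∈ Set.Icc a b, |φ t| ≤ M) → ∀ hR : RDSIntegrable a b α φ,
      Integrable φ ((smeas a b Pp).restrict (Set.Icc a b)) ∧
      Integrable φ ((smeas a b Qq).restrict (Set.Icc a b)) ∧
      RDSIntegral a b α φ =
        (∫ t in Set.Icc a b, φ t ∂(smeas a b Pp)) -
          ∫ t in Set.Icc a b, φ t ∂(smeas a b Qq) := by
    intro φ hφbd hR
    have hspec := hR.choose_spec.choose_spec
    obtain ⟨hpmono, hmmono, hdecomp, hip, him⟩ := hspec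
    set p := hR.choose with hpdef
    set m := hR.choose_spec.choose with hmdef
    have hRval : RDSIntegral a b α φ =
        RDSIntegralInc a b p φ - RDSIntegralInc a b m φ := by
      rw [RDSIntegral, dif_pos hR]
    set hfun : ℝ → ℝ := fun t => p t - Pp t with hhdef
    have hhm : MonotoneOn hfun (Set.Icc a b) := hmin p m hpmono hmmono hdecomp
    have hmeq : Set.EqOn (fun t => m t - Qq t) hfun (Set.Icc a b) := by
      intro t ht
      have h1 := hdecomp t ht
      have h2 := hPQ t
      simp only [hhdef]
      linarith
    have hmmono' : MonotoneOn (fun t => m t - Qq t) (Set.Icc a b) := by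
      intro s' hs' t' ht' hst'
      have e1 : m s' - Qq s' = hfun s' := hmeq hs'
      have e2 : m t' - Qq t' = hfun t' := hmeq ht'
      dsimp only
      rw [e1, e2]
      exact hhm hs' ht' hst'
    have hpfun : p = fun t => Pp t + hfun t := funext fun t => by simp only [hhdef]; ring
    have hmeasp : smeas a b p = smeas a b Pp + smeas a b hfun := by
      rw [hpfun]
      exact smeas_add hab.le hPmono hhm
    have hmfun : m = fun t => Qq t + (m t - Qq t) := funext fun t => by ring
    have hmeasm : smeas a b m = smeas a b Qq + smeas a b hfun := by
      conv_lhs => rw [hmfun]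
      rw [smeas_add hab.le hQmono hmmono', smeas_congr hab.le hmeq]
    obtain ⟨hintp, hvalp⟩ := repr_int hab hpmono hφbd hip
    obtain ⟨hintm, hvalm⟩ := repr_int hab hmmono hφbd him
    have hintp' : Integrable φ
        ((smeas a b Pp).restrict (Set.Icc a b) + (smeas a b hfun).restrict (Set.Icc a b)) := by
      rw [← Measure.restrict_add, ← hmeasp]; exact hintp
    have hintm' : Integrable φ
        ((smeas a b Qq).restrict (Set.Icc a b) + (smeas a b hfun).restrict (Set.Icc a b)) := by
      rw [← Measure.restrict_add, ← hmeasm]; exact hintm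
    have hP1 : Integrable φ ((smeas a b Pp).restrict (Set.Icc a b)) :=
      hintp'.mono_measure (Measure.le_add_right le_rfl)
    have hH1 : Integrable φ ((smeas a b hfun).restrict (Set.Icc a b)) :=
      hintp'.mono_measure (Measure.le_add_left le_rfl)
    have hQ1 : Integrable φ ((smeas a b Qq).restrict (Set.Icc a b)) :=
      hintm'.mono_measure (Measure.le_add_right le_rfl)
    have hsplitp : ∫ t in Set.Icc a b, φ t ∂(smeas a b p) =
        (∫ t in Set.Icc a b, φ t ∂(smeas a b Pp)) +
          ∫ t in Set.Icc a b, φ t ∂(smeas a b hfun) := by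
      rw [hmeasp]
      rw [show ((smeas a b Pp + smeas a b hfun).restrict (Set.Icc a b)) =
        (smeas a b Pp).restrict (Set.Icc a b) + (smeas a b hfun).restrict (Set.Icc a b)
        from Measure.restrict_add _ _ _]
      exact integral_add_measure hP1 hH1
    have hsplitm : ∫ t in Set.Icc a b, φ t ∂(smeas a b m) =
        (∫ t in Set.Icc a b, φ t ∂(smeas a b Qq)) +
          ∫ t in Set.Icc a b, φ t ∂(smeas a b hfun) := by
      rw [hmeasm]
      rw [show ((smeas a b Qq + smeas a b hfun).restrict (Set.Icc a b)) =
        (smeas a b Qq).restrict (Set.Icc a b) + (smeas a b hfun).restrict (Set.Icc a b)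
        from Measure.restrict_add _ _ _]
      exact integral_add_measure hQ1 hH1
    refine ⟨hP1, hQ1, ?_⟩
    rw [hRval]
    have e1 : RDSIntegralInc a b p φ =
        (∫ t in Set.Icc a b, φ t ∂(smeas a b Pp)) +
          ∫ t in Set.Icc a b, φ t ∂(smeas a b hfun) := hvalp.symm.trans hsplitp
    have e2 : RDSIntegralInc a b m φ =
        (∫ t in Set.Icc a b, φ t ∂(smeas a b Qq)) +
          ∫ t in Set.Icc a b, φ t ∂(smeas a b hfun) := hvalm.symm.trans hsplitm
    rw [e1, e2]
    ring
  obtain ⟨hgP, hgQ, hgval⟩ := rep g hgM hg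
  haveI : IsFiniteMeasure ((smeas a b Pp).restrict (Set.Icc a b)) :=
    isFiniteMeasure_restrict hab hPmono
  haveI : IsFiniteMeasure ((smeas a b Qq).restrict (Set.Icc a b)) :=
    isFiniteMeasure_restrict hab hQmono
  have TP : Tendsto (fun n => ∫ t in Set.Icc a b, f n t ∂(smeas a b Pp)) atTop
      (𝓝 (∫ t in Set.Icc a b, g t ∂(smeas a b Pp))) := by
    apply tendsto_integral_of_dominated_convergence (fun _ => M)
      (fun n => ((rep (f n) (hM n) (hfi n)).1).aestronglyMeasurable)
      (integrable_const M)
    · intro n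
      filter_upwards [ae_restrict_mem measurableSet_Icc] with t ht
      rw [Real.norm_eq_abs]; exact hM n t ht
    · filter_upwards [ae_restrict_mem measurableSet_Icc] with t ht
      exact hptwise t ht
  have TQ : Tendsto (fun n => ∫ t in Set.Icc a b, f n t ∂(smeas a b Qq)) atTop
      (𝓝 (∫ t in Set.Icc a b, g t ∂(smeas a b Qq))) := by
    apply tendsto_integral_of_dominated_convergence (fun _ => M)
      (fun n => ((rep (f n) (hM n) (hfi n)).2.1).aestronglyMeasurable)
      (integrable_const M)
    · intro n
      filter_upwards [ae_restrict_mem measurableSet_Icc] with t ht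
      rw [Real.norm_eq_abs]; exact hM n t ht
    · filter_upwards [ae_restrict_mem measurableSet_Icc] with t ht
      exact hptwise t ht
  have Tsub := TP.sub TQ
  rw [← hgval] at Tsub
  apply Tsub.congr
  intro n
  exact ((rep (f n) (hM n) (hfi n)).2.2).symm
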